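/- For two finite simple graphs G and H the following are equivalent: (1) G and H are singularly cospectral; (2) f_G(p) = f_H(p) for every real p ≥ 1; (3) there exists a sequence of real numbers (x_n) with x_n ≥ 1 for all n and x_n → ∞ such that f_G(x_n) = f_H(x_n) for all n. -/

import Mathlib

open Matrix Polynomial

/-- The real adjacency matrix of a finite simple graph. -/
noncomputable def SimpleGraph.adjMat {V : Type*} [Fintype V] (G : SimpleGraph V) :
    Matrix V V ℝ :=
  letI := Classical.decRel G.Adj
  G.adjMatrix ℝ

/-- The multiset of eigenvalues of the adjacency matrix, counted with multiplicity
(the roots of the characteristic polynomial). -/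
noncomputable def SimpleGraph.eigMultiset {V : Type*} [Fintype V] [DecidableEq V]
    (G : SimpleGraph V) : Multiset ℝ :=
  G.adjMat.charpoly.roots

/-- The multiset of nonzero singular values of a graph, counted with multiplicity:
the nonzero absolute values of the eigenvalues of its adjacency matrix. -/
noncomputable def SimpleGraph.nzSingVals {V : Type*} [Fintype V] [DecidableEq V]
    (G : SimpleGraph V) : Multiset ℝ :=
  (G.eigMultiset.map (fun x => |x|)).filter (fun x => x ≠ 0)

/-- Two graphs are singularly cospectral if their multisets of nonzero singular
values (with multiplicities) coincide. -/
def SingularlyCospectral {V W : Type*} [Fintype V] [DecidableEq V] [Fintype W] [DecidableEq W]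
    (G : SimpleGraph V) (H : SimpleGraph W) : Prop :=
  G.nzSingVals = H.nzSingVals

/-- The Schatten `p`-norm of the adjacency matrix of `G`:
`f_G(p) = (Σ_i s_i(G)^p)^(1/p)`, where the `s_i(G)` are the singular values of `G`,
i.e. the absolute values of the eigenvalues of its adjacency matrix. -/
noncomputable def SimpleGraph.schattenNorm {V : Type*} [Fintype V] [DecidableEq V]
    (G : SimpleGraph V) (p : ℝ) : ℝ :=
  ((G.eigMultiset.map (fun x => |x| ^ p)).sum) ^ (1 / p)


open Filter Real

open Filter Real

lemma aux_tendsto_count (M : Multiset ℝ) (a : ℝ) (ha : 0 < a)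
    (hpos : ∀ s ∈ M, 0 < s) (hle : ∀ s ∈ M, s ≤ a)
    {x : ℕ → ℝ} (hx : Tendsto x atTop atTop) :
    Tendsto (fun n => ((M.map (fun s => (s / a) ^ (x n))).sum)) atTop
      (nhds (M.count a)) := by
  classical
  induction M using Multiset.induction with
  | empty => simp [tendsto_const_nhds]
  | cons s M ih =>
    have hs : 0 < s := hpos s (Multiset.mem_cons_self s M)
    have hsa : s ≤ a := hle s (Multiset.mem_cons_self s M)
    have ih' := ih (fun t ht => hpos t (Multiset.mem_cons_of_mem ht))
      (fun t ht => hle t (Multiset.mem_cons_of_mem ht))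
    have hterm : Tendsto (fun n => (s / a) ^ (x n)) atTop
        (nhds (if s = a then (1:ℝ) else 0)) := by
      by_cases h : s = a
      · simp only [h, div_self ha.ne', Real.one_rpow, if_pos h]
        exact tendsto_const_nhds
      · have hlt : s < a := lt_of_le_of_ne hsa h
        have h1 : (s / a) < 1 := (div_lt_one ha).mpr hlt
        have h2 : (-1 : ℝ) < s / a := lt_trans neg_one_lt_zero (div_pos hs ha)
        simpa [if_neg h, Function.comp_def] using (tendsto_rpow_atTop_of_base_lt_one _ h2 h1).comp hx
    have : Tendsto (fun n => (s / a) ^ (x n) + ((M.map (fun s => (s / a) ^ (x n))).sum))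
        atTop (nhds ((if s = a then (1:ℝ) else 0) + M.count a)) := hterm.add ih'
    simp only [Multiset.map_cons, Multiset.sum_cons]
    convert this using 2
    rcases eq_or_ne s a with h | h
    · simp [h, Multiset.count_cons]
      ring
    · simp [Multiset.count_cons, Ne.symm h, h]

lemma aux_multiset_eq (S T : Multiset ℝ)
    (hS : ∀ s ∈ S, 0 < s) (hT : ∀ s ∈ T, 0 < s)
    {x : ℕ → ℝ} (hx : Tendsto x atTop atTop)
    (heq : ∀ n, (S.map (fun s => s ^ (x n))).sum = (T.map (fun s => s ^ (x n))).sum) :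
    S = T := by
  classical
  by_contra hne
  set A := S - T with hA
  set B := T - S with hB
  have hAS : A ≤ S := tsub_le_self
  have hBT : B ≤ T := tsub_le_self
  have hD : A + B ≠ 0 := by
    intro h
    rcases add_eq_zero.mp h with ⟨h1, h2⟩
    exact hne (le_antisymm (tsub_eq_zero_iff_le.mp h1) (tsub_eq_zero_iff_le.mp h2))
  obtain ⟨a, haD⟩ := Multiset.exists_mem_of_ne_zero hD
  -- take the maximum instead
  have hDfin : (A + B).toFinset.Nonempty := ⟨a, Multiset.mem_toFinset.mpr haD⟩
  set m := (A + B).toFinset.max' hDfin with hm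
  have hmD : m ∈ A + B := Multiset.mem_toFinset.mp ((A + B).toFinset.max'_mem hDfin)
  have hDpos : ∀ s ∈ A + B, 0 < s := by
    intro s hs
    rcases Multiset.mem_add.mp hs with h | h
    · exact hS s (Multiset.mem_of_le hAS h)
    · exact hT s (Multiset.mem_of_le hBT h)
  have hmpos : 0 < m := hDpos m hmD
  have hDle : ∀ s ∈ A + B, s ≤ m := fun s hs =>
    Finset.le_max' _ s (Multiset.mem_toFinset.mpr hs)
  -- sums over A and B agree
  have hsum : ∀ n, (A.map (fun s => s ^ (x n))).sum = (B.map (fun s => s ^ (x n))).sum := by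
    intro n
    have h1 : S = A + S ∩ T := (Multiset.sub_add_inter S T).symm
    have h2 : T = B + S ∩ T := by
      rw [hB, Multiset.inter_comm]
      exact (Multiset.sub_add_inter T S).symm
    have e1 : (S.map (fun s => s ^ (x n))).sum
        = (A.map (fun s => s ^ (x n))).sum + ((S ∩ T).map (fun s => s ^ (x n))).sum := by
      conv_lhs => rw [h1]
      rw [Multiset.map_add, Multiset.sum_add]
    have e2 : (T.map (fun s => s ^ (x n))).sum
        = (B.map (fun s => s ^ (x n))).sum + ((S ∩ T).map (fun s => s ^ (x n))).sum := by
      conv_lhs => rw [h2]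
      rw [Multiset.map_add, Multiset.sum_add]
    have := heq n
    rw [e1, e2] at this
    linarith
  -- normalized sums
  have key : ∀ (n : ℕ),
      ((A.map (fun s => (s / m) ^ (x n))).sum) - ((B.map (fun s => (s / m) ^ (x n))).sum) = 0 := by
    intro n
    have hdiv : ∀ (M : Multiset ℝ), (∀ s ∈ M, 0 < s) →
        (M.map (fun s => (s / m) ^ (x n))).sum = (M.map (fun s => s ^ (x n))).sum / m ^ (x n) := by
      intro M hM
      have : M.map (fun s => (s / m) ^ (x n))
          = M.map (fun s => s ^ (x n) * (m ^ (x n))⁻¹) :=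
        Multiset.map_congr rfl (fun s hs => by
          rw [Real.div_rpow (hM s hs).le hmpos.le, div_eq_mul_inv])
      rw [this, Multiset.sum_map_mul_right, div_eq_mul_inv]
    rw [hdiv A (fun s hs => hDpos s (Multiset.mem_add.mpr (Or.inl hs))),
        hdiv B (fun s hs => hDpos s (Multiset.mem_add.mpr (Or.inr hs))), hsum n, sub_self]
  have tA := aux_tendsto_count A m hmpos
    (fun s hs => hDpos s (Multiset.mem_add.mpr (Or.inl hs)))
    (fun s hs => hDle s (Multiset.mem_add.mpr (Or.inl hs))) hx
  have tB := aux_tendsto_count B m hmpos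
    (fun s hs => hDpos s (Multiset.mem_add.mpr (Or.inr hs)))
    (fun s hs => hDle s (Multiset.mem_add.mpr (Or.inr hs))) hx
  have tdiff := tA.sub tB
  have t0 : Tendsto (fun n =>
      ((A.map (fun s => (s / m) ^ (x n))).sum) - ((B.map (fun s => (s / m) ^ (x n))).sum))
      atTop (nhds 0) := by
    simp only [key]
    exact tendsto_const_nhds
  have hcount : (A.count m : ℝ) - B.count m = 0 := tendsto_nhds_unique tdiff t0
  have hcc : A.count m = B.count m := by
    have := sub_eq_zero.mp hcount
    exact_mod_cast this
  rw [hA, hB, Multiset.count_sub, Multiset.count_sub] at hcc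
  have hmem : 0 < A.count m ∨ 0 < B.count m := by
    rcases Multiset.mem_add.mp hmD with h | h
    · exact Or.inl (Multiset.count_pos.mpr h)
    · exact Or.inr (Multiset.count_pos.mpr h)
  rw [hA, hB, Multiset.count_sub, Multiset.count_sub] at hmem
  omega

lemma aux_nz_pos {V : Type*} [Fintype V] [DecidableEq V] (G : SimpleGraph V) :
    ∀ s ∈ G.nzSingVals, 0 < s := by
  intro s hs
  rw [SimpleGraph.nzSingVals, Multiset.mem_filter] at hs
  obtain ⟨h1, h2⟩ := hs
  obtain ⟨y, _, rfl⟩ := Multiset.mem_map.mp h1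
  exact lt_of_le_of_ne (abs_nonneg y) (Ne.symm h2)

lemma aux_schatten {V : Type*} [Fintype V] [DecidableEq V] (G : SimpleGraph V)
    (p : ℝ) (hp : p ≠ 0) :
    G.schattenNorm p = ((G.nzSingVals.map (fun s => s ^ p)).sum) ^ (1 / p) := by
  rw [SimpleGraph.schattenNorm, SimpleGraph.nzSingVals]
  congr 1
  have h1 : G.eigMultiset.map (fun x => |x| ^ p)
      = (G.eigMultiset.map (fun x => |x|)).map (fun x => x ^ p) := by
    rw [Multiset.map_map]; rfl
  rw [h1]
  set M := G.eigMultiset.map (fun x => |x|) with hM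
  have h2 : M = M.filter (fun x => x ≠ 0) + M.filter (fun x => ¬ x ≠ 0) :=
    (Multiset.filter_add_not _ _).symm
  conv_lhs => rw [h2]
  rw [Multiset.map_add, Multiset.sum_add]
  have h3 : ((M.filter (fun x => ¬ x ≠ 0)).map (fun x => x ^ p)).sum = 0 := by
    apply Multiset.sum_eq_zero
    intro y hy
    obtain ⟨z, hz, rfl⟩ := Multiset.mem_map.mp hy
    have : z = 0 := by simpa using (Multiset.mem_filter.mp hz).2
    rw [this, Real.zero_rpow hp]
  rw [h3, add_zero]

lemma aux_sum_eq_of_norm_eq {V W : Type*} [Fintype V] [DecidableEq V] [Fintype W] [DecidableEq W]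
    (G : SimpleGraph V) (H : SimpleGraph W) (p : ℝ) (hp : 1 ≤ p)
    (h : G.schattenNorm p = H.schattenNorm p) :
    (G.nzSingVals.map (fun s => s ^ p)).sum = (H.nzSingVals.map (fun s => s ^ p)).sum := by
  have hp0 : p ≠ 0 := by linarith
  rw [aux_schatten G p hp0, aux_schatten H p hp0] at h
  have hnnG : 0 ≤ (G.nzSingVals.map (fun s => s ^ p)).sum := by
    apply Multiset.sum_nonneg
    intro y hy
    obtain ⟨z, hz, rfl⟩ := Multiset.mem_map.mp hy
    exact Real.rpow_nonneg (aux_nz_pos G z hz).le _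
  have hnnH : 0 ≤ (H.nzSingVals.map (fun s => s ^ p)).sum := by
    apply Multiset.sum_nonneg
    intro y hy
    obtain ⟨z, hz, rfl⟩ := Multiset.mem_map.mp hy
    exact Real.rpow_nonneg (aux_nz_pos H z hz).le _
  have := congrArg (fun y : ℝ => y ^ p) h
  simp only [one_div] at this
  rwa [Real.rpow_inv_rpow hnnG hp0, Real.rpow_inv_rpow hnnH hp0] at this


/-- For two finite simple graphs `G` and `H` the following are equivalent:
(1) `G` and `H` are singularly cospectral;
(2) `f_G(p) = f_H(p)` for every real `p ≥ 1`;
(3) there is a sequence `(x_n)` of reals with `x_n ≥ 1` tending to infinity such that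
`f_G(x_n) = f_H(x_n)` for all `n`. -/
theorem singularlyCospectral_iff_schattenNorm
    {V W : Type*} [Fintype V] [DecidableEq V] [Fintype W] [DecidableEq W]
    (G : SimpleGraph V) (H : SimpleGraph W) :
    (SingularlyCospectral G H ↔ ∀ p : ℝ, 1 ≤ p → G.schattenNorm p = H.schattenNorm p) ∧
    (SingularlyCospectral G H ↔ ∃ x : ℕ → ℝ, (∀ n, 1 ≤ x n) ∧
      Filter.Tendsto x Filter.atTop Filter.atTop ∧
      ∀ n, G.schattenNorm (x n) = H.schattenNorm (x n)) := by
  have h12 : SingularlyCospectral G H → ∀ p : ℝ, 1 ≤ p → G.schattenNorm p = H.schattenNorm p := by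
    intro hsc p hp
    have hp0 : p ≠ 0 := by linarith
    rw [aux_schatten G p hp0, aux_schatten H p hp0, hsc]
  have h23 : (∀ p : ℝ, 1 ≤ p → G.schattenNorm p = H.schattenNorm p) →
      ∃ x : ℕ → ℝ, (∀ n, 1 ≤ x n) ∧ Tendsto x atTop atTop ∧
        ∀ n, G.schattenNorm (x n) = H.schattenNorm (x n) := by
    intro h
    refine ⟨fun n => (n : ℝ) + 1, fun n => by simp [Nat.cast_nonneg], ?_, fun n => h _ (by simp)⟩
    exact tendsto_atTop_add_const_right _ 1 tendsto_natCast_atTop_atTop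
  have h31 : (∃ x : ℕ → ℝ, (∀ n, 1 ≤ x n) ∧ Tendsto x atTop atTop ∧
      ∀ n, G.schattenNorm (x n) = H.schattenNorm (x n)) → SingularlyCospectral G H := by
    rintro ⟨x, hx1, hxt, hxe⟩
    exact aux_multiset_eq _ _ (aux_nz_pos G) (aux_nz_pos H) hxt
      (fun n => aux_sum_eq_of_norm_eq G H (x n) (hx1 n) (hxe n))
  exact ⟨⟨h12, fun h => h31 (h23 h)⟩, ⟨fun h => h23 (h12 h), h31⟩⟩
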